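/- arXiv:2410.13315 — 2 statements merged into one kernel-verified Lean document; each statement's English description precedes it below -/
import Mathlib

section
/- Under the hypotheses of the previous estimate with ε = μ₀/8 and λ ∈ (0, C_F/C_G], if (uₙ) ⊂ X satisfies ∥uₙ⁻∥ → ∞ and (∥uₙ⁺∥) is bounded, then 𝒥(uₙ) → −∞, where 𝒥(u) = ½∥u⁺∥² − ½∥u⁻∥² − ∫(F(u) − λG(u))dx. More precisely, 𝒥(uₙ) ≤ ¾∥uₙ⁺∥² − ¼∥uₙ⁻∥². -/
open Filter MeasureTheory

theorem stmt11 {N : ℕ} {X : Type*} [NormedAddCommGroup X] [InnerProductSpace ℝ X]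
    [CompleteSpace X]
    (Xp : Submodule ℝ X) [Xp.HasOrthogonalProjection]
    (ι : X →L[ℝ] (Lp ℝ 2 (volume : Measure (EuclideanSpace ℝ (Fin N)))))
    (F G : ℝ → ℝ) (q μ₀ CF CG lam : ℝ)
    (hq : 2 < q) (hCF : 0 < CF) (hCFG : CF ≤ CG) (hμ : 0 < μ₀)
    (hF : ∀ t : ℝ, CF * |t| ^ q - (μ₀ / 8) * t ^ 2 ≤ F t)
    (hG : ∀ t : ℝ, G t ≤ (μ₀ / 8) * t ^ 2 + CG * |t| ^ q)
    (hemb : ∀ u : X, μ₀ * (∫ x, (ι u x) ^ 2) ≤ ‖u‖ ^ 2)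
    (hlam : 0 < lam) (hlam2 : lam ≤ CF / CG)
    (J : X → ℝ)
    (hJ : ∀ u : X, J u = (1 / 2) * ‖(Xp.orthogonalProjectionOnto u : X)‖ ^ 2
      - (1 / 2) * ‖(Xpᗮ.orthogonalProjectionOnto u : X)‖ ^ 2
      - ∫ x, (F (ι u x) - lam * G (ι u x)))
    (u : ℕ → X)
    (hmInf : Tendsto (fun n => ‖(Xpᗮ.orthogonalProjectionOnto (u n) : X)‖) atTop atTop)
    (hpBdd : ∃ C : ℝ, ∀ n, ‖(Xp.orthogonalProjectionOnto (u n) : X)‖ ≤ C) :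
    (∀ n, J (u n) ≤ (3 / 4) * ‖(Xp.orthogonalProjectionOnto (u n) : X)‖ ^ 2
      - (1 / 4) * ‖(Xpᗮ.orthogonalProjectionOnto (u n) : X)‖ ^ 2) ∧
    Tendsto (fun n => J (u n)) atTop atBot := by
  have hCG : 0 < CG := lt_of_lt_of_le hCF hCFG
  have hlamCG : lam * CG ≤ CF := (le_div_iff₀ hCG).mp hlam2
  have hlam1 : lam ≤ 1 := by
    have : CF / CG ≤ 1 := div_le_one_of_le₀ hCFG hCG.le
    linarith
  -- pointwise lower bound
  have hpt : ∀ t : ℝ, -(μ₀ / 4) * t ^ 2 ≤ F t - lam * G t := by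
    intro t
    have h1 := hF t
    have h2 := hG t
    have h3 : lam * G t ≤ lam * ((μ₀ / 8) * t ^ 2 + CG * |t| ^ q) :=
      mul_le_mul_of_nonneg_left h2 hlam.le
    have h4 : (0:ℝ) ≤ |t| ^ q := by positivity
    nlinarith [sq_nonneg t, mul_nonneg (sub_nonneg.mpr hlamCG) h4,
      mul_nonneg (mul_nonneg hμ.le (sub_nonneg.mpr hlam1)) (sq_nonneg t)]
  -- key bound for each v
  have key : ∀ v : X, J v ≤ (3 / 4) * ‖(Xp.orthogonalProjectionOnto v : X)‖ ^ 2
      - (1 / 4) * ‖(Xpᗮ.orthogonalProjectionOnto v : X)‖ ^ 2 := by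
    intro v
    have hsq : Integrable (fun x => (ι v : EuclideanSpace ℝ (Fin N) → ℝ) x ^ 2) volume :=
      (Lp.memLp (ι v)).integrable_sq
    have hsqnn : 0 ≤ ∫ x, (ι v x) ^ 2 := integral_nonneg fun x => sq_nonneg _
    have hnorm : μ₀ * (∫ x, (ι v x) ^ 2) ≤ ‖v‖ ^ 2 := hemb v
    have hI : -(1 / 4) * ‖v‖ ^ 2 ≤ ∫ x, (F (ι v x) - lam * G (ι v x)) := by
      by_cases hint : Integrable (fun x => F (ι v x) - lam * G (ι v x)) volume
      · have h1 : ∫ x, -(μ₀ / 4) * (ι v x) ^ 2 ≤ ∫ x, (F (ι v x) - lam * G (ι v x)) :=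
          integral_mono (hsq.const_mul _) hint fun x => hpt _
        have h2 : ∫ x, -(μ₀ / 4) * (ι v x) ^ 2 = -(μ₀ / 4) * ∫ x, (ι v x) ^ 2 :=
          integral_const_mul _ _
        rw [h2] at h1
        nlinarith
      · rw [integral_undef hint]
        nlinarith [sq_nonneg ‖v‖]
    have hpyth : ‖v‖ ^ 2 = ‖(Xp.orthogonalProjectionOnto v : X)‖ ^ 2
        + ‖(Xpᗮ.orthogonalProjectionOnto v : X)‖ ^ 2 :=
      Submodule.norm_sq_eq_add_norm_sq_projection v Xp
    rw [hJ v]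
    nlinarith
  refine ⟨fun n => key (u n), ?_⟩
  obtain ⟨C, hC⟩ := hpBdd
  have hbd : ∀ n, J (u n) ≤ (3 / 4) * C ^ 2
      - (1 / 4) * ‖(Xpᗮ.orthogonalProjectionOnto (u n) : X)‖ ^ 2 := by
    intro n
    have h1 := key (u n)
    have h2 : ‖(Xp.orthogonalProjectionOnto (u n) : X)‖ ^ 2 ≤ C ^ 2 := by
      have := hC n
      nlinarith [norm_nonneg (Xp.orthogonalProjectionOnto (u n) : X)]
    linarith
  have hsq2 : Tendsto (fun n => ‖(Xpᗮ.orthogonalProjectionOnto (u n) : X)‖ ^ 2) atTop atTop := by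
    simpa [pow_two] using hmInf.atTop_mul_atTop₀ hmInf
  have h3 : Tendsto (fun n => (1 / 4) * ‖(Xpᗮ.orthogonalProjectionOnto (u n) : X)‖ ^ 2)
      atTop atTop := hsq2.const_mul_atTop (by norm_num)
  have h4 : Tendsto (fun n => (3 / 4) * C ^ 2
      - (1 / 4) * ‖(Xpᗮ.orthogonalProjectionOnto (u n) : X)‖ ^ 2) atTop atBot := by
    simpa [sub_eq_add_neg] using
      tendsto_atBot_add_const_left atTop ((3 / 4) * C ^ 2)
        (tendsto_neg_atTop_atBot.comp h3)
  exact tendsto_atBot_mono hbd h4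
end

section
/- Let X be a Hilbert space with unitary G-action, X = X⁺ ⊕ X⁻ with G-invariant summands, and 𝒥(u) = ½∥u⁺∥² − ½∥u⁻∥² − ℐ(u), where ℐ is C¹, G-invariant, ℐ' is sequentially weak-to-weak* continuous, and ℐ' satisfies: if (vₙ) is bounded and φₙ ⇀_G 0 then ℐ'(vₙ)(φₙ) → 0 (GWC). Suppose (uₙ) is a bounded sequence with ∥∇𝒥(uₙ)∥ → 0, infₙ |||uₙ||| ≥ δ/2 > 0, and that the pair (X, G) is a dislocation space. If uₙ ⇀_G 0, then ∥uₙ^±∥ → 0, contradicting infₙ |||uₙ||| ≥ δ/2 since |||uₙ||| ≤ ∥uₙ∥. Hence there exist gₙ ∈ G and v ≠ 0 with gₙ uₙ ⇀ v along a subsequence, and v is a nontrivial critical point of 𝒥. -/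
open Filter
open scoped RealInnerProductSpace

/-- `u_n ⇀_G 0`: for every `φ`, `sup_{g ∈ G} ⟨u_n, g φ⟩ → 0`. -/
def GWeakNull {X G : Type*} [NormedAddCommGroup X] [InnerProductSpace ℝ X] [Group G]
    (T : G →* (X ≃ₗᵢ[ℝ] X)) (u : ℕ → X) : Prop :=
  ∀ φ : X, ∀ ε > 0, ∃ N : ℕ, ∀ n ≥ N, ∀ g : G, |(⟪u n, T g φ⟫)| < ε

/-- A sequence of group elements converges weakly to `0` (as operators). -/
def OpWeakNull {X G : Type*} [NormedAddCommGroup X] [InnerProductSpace ℝ X] [Group G]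
    (T : G →* (X ≃ₗᵢ[ℝ] X)) (g : ℕ → G) : Prop :=
  ∀ w φ : X, Tendsto (fun n => ⟪T (g n) w, φ⟫) atTop (nhds 0)


section Aux
variable {X : Type*} [NormedAddCommGroup X] [InnerProductSpace ℝ X] [CompleteSpace X]

lemma orthogonalProjection_add_orthogonalProjection_orthogonal (K : Submodule ℝ X)
    [K.HasOrthogonalProjection] (w : X) :
    (K.orthogonalProjectionOnto w : X) + (Kᗮ.orthogonalProjectionOnto w : X) = w :=
  K.starProjection_add_starProjection_orthogonal w

lemma inner_orthogonalProjection_left_eq_right {K : Submodule ℝ X}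
    [K.HasOrthogonalProjection] (u v : X) :
    ⟪(K.orthogonalProjectionOnto u : X), v⟫ = ⟪u, (K.orthogonalProjectionOnto v : X)⟫ :=
  Submodule.inner_starProjection_left_eq_right (K := K) u v

lemma orthogonalProjection_eq_self_iff {K : Submodule ℝ X}
    [K.HasOrthogonalProjection] {v : X} : (K.orthogonalProjectionOnto v : X) = v ↔ v ∈ K :=
  Submodule.starProjection_eq_self_iff

lemma sub_orthogonalProjection_mem_orthogonal {K : Submodule ℝ X}
    [K.HasOrthogonalProjection] (v : X) : v - (K.orthogonalProjectionOnto v : X) ∈ Kᗮ :=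
  Submodule.sub_starProjection_mem_orthogonal v

lemma orthogonalProjection_norm_le (K : Submodule ℝ X)
    [K.HasOrthogonalProjection] : ‖K.orthogonalProjectionOnto‖ ≤ 1 :=
  K.orthogonalProjectionOnto_norm_le

lemma fderivJ_aux (Xp : Submodule ℝ X) [Submodule.HasOrthogonalProjection Xp]
    (I : X → ℝ) (hI : ContDiff ℝ 1 I)
    (J : X → ℝ)
    (hJ : ∀ u : X, J u = (1 / 2) * ‖(Submodule.orthogonalProjectionOnto Xp u : X)‖ ^ 2
      - (1 / 2) * ‖(Submodule.orthogonalProjectionOnto Xpᗮ u : X)‖ ^ 2 - I u)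
    (w φ : X) :
    fderiv ℝ J w φ = ⟪(Submodule.orthogonalProjectionOnto Xp w : X), φ⟫
      - ⟪(Submodule.orthogonalProjectionOnto Xpᗮ w : X), φ⟫ - fderiv ℝ I w φ := by
  classical
  set A : X →L[ℝ] X :=
    Xp.subtypeL.comp (Submodule.orthogonalProjectionOnto Xp) - Xpᗮ.subtypeL.comp (Submodule.orthogonalProjectionOnto Xpᗮ) with hA
  have hAapp : ∀ x : X, A x = (Submodule.orthogonalProjectionOnto Xp x : X) - (Submodule.orthogonalProjectionOnto Xpᗮ x : X) := by
    intro x; simp [hA]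
  have hPsq : ∀ x : X, ⟪(Submodule.orthogonalProjectionOnto Xp x : X), x⟫ = ‖(Submodule.orthogonalProjectionOnto Xp x : X)‖ ^ 2 := by
    intro x
    have hd : x = (Submodule.orthogonalProjectionOnto Xp x : X) + (Submodule.orthogonalProjectionOnto Xpᗮ x : X) :=
      (orthogonalProjection_add_orthogonalProjection_orthogonal Xp x).symm
    nth_rewrite 2 [hd]
    rw [inner_add_right,
      Submodule.inner_right_of_mem_orthogonal (SetLike.coe_mem _) (SetLike.coe_mem _),
      real_inner_self_eq_norm_sq]
    ring
  have hMsq : ∀ x : X, ⟪(Submodule.orthogonalProjectionOnto Xpᗮ x : X), x⟫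
      = ‖(Submodule.orthogonalProjectionOnto Xpᗮ x : X)‖ ^ 2 := by
    intro x
    have hd : x = (Submodule.orthogonalProjectionOnto Xp x : X) + (Submodule.orthogonalProjectionOnto Xpᗮ x : X) :=
      (orthogonalProjection_add_orthogonalProjection_orthogonal Xp x).symm
    nth_rewrite 2 [hd]
    rw [inner_add_right]
    rw [show (⟪(Submodule.orthogonalProjectionOnto Xpᗮ x : X), (Submodule.orthogonalProjectionOnto Xp x : X)⟫ : ℝ)
        = 0 from by
      rw [real_inner_comm]
      exact Submodule.inner_right_of_mem_orthogonal (SetLike.coe_mem _) (SetLike.coe_mem _)]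
    rw [real_inner_self_eq_norm_sq]
    ring
  have hJA : J = fun x => (1 / 2) * ⟪A x, x⟫ - I x := by
    funext x
    rw [hJ x, hAapp x, inner_sub_left, hPsq x, hMsq x]
    ring
  have hQ : HasFDerivAt (fun x => ⟪A x, x⟫)
      ((fderivInnerCLM ℝ (A w, w)).comp (A.prod (ContinuousLinearMap.id ℝ X))) w :=
    (A.hasFDerivAt).inner ℝ (hasFDerivAt_id w)
  have hIw : HasFDerivAt I (fderiv ℝ I w) w :=
    ((hI.differentiable one_ne_zero) w).hasFDerivAt
  have hJd : HasFDerivAt J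
      (((1 / 2 : ℝ) • ((fderivInnerCLM ℝ (A w, w)).comp (A.prod (ContinuousLinearMap.id ℝ X))))
        - fderiv ℝ I w) w := by
    rw [hJA]
    exact (hQ.const_mul (1 / 2)).sub hIw
  rw [hJd.fderiv]
  have hself : ⟪A φ, w⟫ = ⟪A w, φ⟫ := by
    rw [hAapp, hAapp, inner_sub_left, inner_sub_left,
      inner_orthogonalProjection_left_eq_right, inner_orthogonalProjection_left_eq_right,
      real_inner_comm _ ((Submodule.orthogonalProjectionOnto Xp w : X)),
      real_inner_comm _ ((Submodule.orthogonalProjectionOnto Xpᗮ w : X))]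
  simp only [ContinuousLinearMap.sub_apply, ContinuousLinearMap.smul_apply,
    ContinuousLinearMap.comp_apply, ContinuousLinearMap.prod_apply,
    ContinuousLinearMap.coe_id', id_eq, fderivInnerCLM_apply, smul_eq_mul]
  rw [hself, hAapp]
  rw [inner_sub_left]
  ring

end Aux


lemma weak_compactness_aux {X : Type*} [NormedAddCommGroup X] [InnerProductSpace ℝ X]
    [CompleteSpace X] (w : ℕ → X) (C : ℝ) (hb : ∀ n, ‖w n‖ ≤ C) :
    ∃ ψ : ℕ → ℕ, StrictMono ψ ∧ ∃ v : X,
      ∀ φ : X, Tendsto (fun k => ⟪w (ψ k), φ⟫) atTop (nhds ⟪v, φ⟫) := by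
  classical
  have hC0 : (0 : ℝ) ≤ C := (norm_nonneg _).trans (hb 0)
  -- diagonal extraction via compactness of a countable product of intervals
  set F : ℕ → ℕ → ℝ := fun k j => ⟪w k, w j⟫ with hF
  have hFmem : ∀ k, F k ∈ Set.pi Set.univ (fun _ : ℕ => Set.Icc (-(C * C)) (C * C)) := by
    intro k
    intro j _
    have h1 : |(⟪w k, w j⟫ : ℝ)| ≤ ‖w k‖ * ‖w j‖ := abs_real_inner_le_norm _ _
    have h2 : ‖w k‖ * ‖w j‖ ≤ C * C :=
      mul_le_mul (hb k) (hb j) (norm_nonneg _) hC0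
    have := abs_le.mp (h1.trans h2)
    exact ⟨this.1, this.2⟩
  have hcpt : IsCompact (Set.pi Set.univ (fun _ : ℕ => Set.Icc (-(C * C)) (C * C))) :=
    isCompact_univ_pi fun _ => isCompact_Icc
  obtain ⟨a, -, ψ, hψ, hconv⟩ := hcpt.tendsto_subseq hFmem
  have hpt : ∀ j, Tendsto (fun k => (⟪w (ψ k), w j⟫ : ℝ)) atTop (nhds (a j)) := by
    intro j
    exact (tendsto_pi_nhds.mp hconv) j
  -- the closed span of the sequence
  set S : Submodule ℝ X := (Submodule.span ℝ (Set.range w)).topologicalClosure with hS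
  haveI : CompleteSpace S := (Submodule.isClosed_topologicalClosure _).completeSpace_coe
  have hwm : ∀ k, w k ∈ S :=
    fun k => Submodule.le_topologicalClosure _ (Submodule.subset_span ⟨k, rfl⟩)
  -- convergence on the span
  have hspanlim : ∀ y ∈ Submodule.span ℝ (Set.range w),
      ∃ l : ℝ, Tendsto (fun k => (⟪w (ψ k), y⟫ : ℝ)) atTop (nhds l) := by
    intro y hy
    induction hy using Submodule.span_induction with
    | mem z hz =>
      obtain ⟨j, rfl⟩ := hz
      exact ⟨a j, hpt j⟩
    | zero => exact ⟨0, by simp⟩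
    | add y z _ _ hy hz =>
      obtain ⟨l1, h1⟩ := hy
      obtain ⟨l2, h2⟩ := hz
      exact ⟨l1 + l2, by simpa [inner_add_right] using h1.add h2⟩
    | smul c y _ hy =>
      obtain ⟨l, h⟩ := hy
      exact ⟨c * l, by simpa [real_inner_smul_right] using h.const_mul c⟩
  -- Cauchy for every φ
  have key : ∀ φ : X, CauchySeq (fun k => (⟪w (ψ k), φ⟫ : ℝ)) := by
    intro φ
    set p : X := (Submodule.orthogonalProjectionOnto S φ : X) with hp
    have hforall : ∀ k, (⟪w (ψ k), φ⟫ : ℝ) = ⟪w (ψ k), p⟫ := by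
      intro k
      have horth : φ - p ∈ Sᗮ := sub_orthogonalProjection_mem_orthogonal φ
      have h0 : (⟪w (ψ k), φ - p⟫ : ℝ) = 0 :=
        Submodule.inner_right_of_mem_orthogonal (hwm (ψ k)) horth
      rw [inner_sub_right] at h0
      linarith
    have hpS : p ∈ closure ((Submodule.span ℝ (Set.range w) : Submodule ℝ X) : Set X) := by
      have h1 : p ∈ S := (Submodule.orthogonalProjectionOnto S φ).2
      rw [← Submodule.topologicalClosure_coe]
      exact h1
    simp only [hforall]
    rw [Metric.cauchySeq_iff]
    intro ε hε
    have hden : ∃ y ∈ (Submodule.span ℝ (Set.range w) : Submodule ℝ X),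
        ‖p - y‖ < ε / (3 * (C + 1)) := by
      have hpos : 0 < ε / (3 * (C + 1)) := by positivity
      obtain ⟨y, hy1, hy2⟩ := Metric.mem_closure_iff.mp hpS _ hpos
      exact ⟨y, hy1, by rwa [dist_eq_norm] at hy2⟩
    obtain ⟨y, hy, hyc⟩ := hden
    obtain ⟨l, hl⟩ := hspanlim y hy
    have hcs : CauchySeq (fun k => (⟪w (ψ k), y⟫ : ℝ)) := hl.cauchySeq
    obtain ⟨N, hN⟩ := Metric.cauchySeq_iff.mp hcs (ε / 3) (by positivity)
    refine ⟨N, fun m hm n hn => ?_⟩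
    have hbnd : ∀ k, |(⟪w (ψ k), p - y⟫ : ℝ)| ≤ C * (ε / (3 * (C + 1))) := by
      intro k
      have h1 : |(⟪w (ψ k), p - y⟫ : ℝ)| ≤ ‖w (ψ k)‖ * ‖p - y‖ := abs_real_inner_le_norm _ _
      have h2 : ‖w (ψ k)‖ * ‖p - y‖ ≤ C * (ε / (3 * (C + 1))) :=
        mul_le_mul (hb _) hyc.le (norm_nonneg _) hC0
      exact h1.trans h2
    have hCfr : C * (ε / (3 * (C + 1))) < ε / 3 := by
      have h3 : C * (ε / (3 * (C + 1))) = (C * ε) / (3 * (C + 1)) := by ring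
      rw [h3, div_lt_div_iff₀ (by positivity) (by positivity)]
      nlinarith
    have hmy := hN m hm n hn
    rw [Real.dist_eq] at hmy ⊢
    have e1 : (⟪w (ψ m), p⟫ : ℝ) - ⟪w (ψ n), p⟫
        = ⟪w (ψ m), p - y⟫ + ((⟪w (ψ m), y⟫ : ℝ) - ⟪w (ψ n), y⟫) + (-(⟪w (ψ n), p - y⟫ : ℝ)) := by
      simp only [inner_sub_right]; ring
    rw [e1]
    calc |(⟪w (ψ m), p - y⟫ : ℝ) + ((⟪w (ψ m), y⟫ : ℝ) - ⟪w (ψ n), y⟫) + (-(⟪w (ψ n), p - y⟫ : ℝ))|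
        ≤ |(⟪w (ψ m), p - y⟫ : ℝ)| + |(⟪w (ψ m), y⟫ : ℝ) - ⟪w (ψ n), y⟫|
          + |(-(⟪w (ψ n), p - y⟫ : ℝ))| := abs_add_three _ _ _
      _ < ε := by
          rw [abs_neg]
          have b1 := hbnd m
          have b2 := hbnd n
          linarith
  -- the weak limit via Riesz representation
  have hlim : ∀ φ : X, ∃ l : ℝ, Tendsto (fun k => (⟪w (ψ k), φ⟫ : ℝ)) atTop (nhds l) :=
    fun φ => cauchySeq_tendsto_of_complete (key φ)
  choose Lf hLf using hlim
  have hbound : ∀ φ : X, |Lf φ| ≤ C * ‖φ‖ := by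
    intro φ
    apply le_of_tendsto (hLf φ).abs
    filter_upwards with k
    exact (abs_real_inner_le_norm _ _).trans
      (mul_le_mul_of_nonneg_right (hb _) (norm_nonneg _))
  have hadd : ∀ x y : X, Lf (x + y) = Lf x + Lf y := by
    intro x y
    refine tendsto_nhds_unique (hLf (x + y)) ?_
    simpa [inner_add_right] using (hLf x).add (hLf y)
  have hsmul : ∀ (c : ℝ) (x : X), Lf (c • x) = c * Lf x := by
    intro c x
    refine tendsto_nhds_unique (hLf (c • x)) ?_
    simpa [real_inner_smul_right] using (hLf x).const_mul c
  let Llin : X →ₗ[ℝ] ℝ :=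
    { toFun := Lf
      map_add' := hadd
      map_smul' := hsmul }
  let Lmap : X →L[ℝ] ℝ := Llin.mkContinuous C (fun φ => by
    simpa [Llin] using hbound φ)
  refine ⟨ψ, hψ, (InnerProductSpace.toDual ℝ X).symm Lmap, fun φ => ?_⟩
  rw [InnerProductSpace.toDual_symm_apply]
  exact hLf φ


lemma projComm_aux {X G : Type*} [NormedAddCommGroup X] [InnerProductSpace ℝ X] [CompleteSpace X]
    [Group G] (T : G →* (X ≃ₗᵢ[ℝ] X)) (Xp : Submodule ℝ X) [Submodule.HasOrthogonalProjection Xp]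
    (hXpInv : ∀ (g : G) (u : X), u ∈ Xp → T g u ∈ Xp)
    (hXmInv : ∀ (g : G) (u : X), u ∈ Xpᗮ → T g u ∈ Xpᗮ)
    (g : G) (x : X) :
    (Submodule.orthogonalProjectionOnto Xp (T g x) : X) = T g (Submodule.orthogonalProjectionOnto Xp x : X) := by
  have hd : x = (Submodule.orthogonalProjectionOnto Xp x : X) + (Submodule.orthogonalProjectionOnto Xpᗮ x : X) :=
    (orthogonalProjection_add_orthogonalProjection_orthogonal Xp x).symm
  have h1 : (Submodule.orthogonalProjectionOnto Xp (T g (Submodule.orthogonalProjectionOnto Xp x : X)) : X)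
      = T g (Submodule.orthogonalProjectionOnto Xp x : X) :=
    orthogonalProjection_eq_self_iff.mpr (hXpInv g _ (Submodule.orthogonalProjectionOnto Xp x).2)
  have h2 : Submodule.orthogonalProjectionOnto Xp (T g (Submodule.orthogonalProjectionOnto Xpᗮ x : X)) = 0 :=
    Submodule.orthogonalProjectionOnto_apply_of_mem_orthogonal
      (hXmInv g _ (Submodule.orthogonalProjectionOnto Xpᗮ x).2)
  nth_rewrite 1 [hd]
  rw [map_add, map_add, h2]
  push_cast
  rw [h1]
  simp

lemma projComm'_aux {X G : Type*} [NormedAddCommGroup X] [InnerProductSpace ℝ X] [CompleteSpace X]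
    [Group G] (T : G →* (X ≃ₗᵢ[ℝ] X)) (Xp : Submodule ℝ X) [Submodule.HasOrthogonalProjection Xp]
    (hXpInv : ∀ (g : G) (u : X), u ∈ Xp → T g u ∈ Xp)
    (hXmInv : ∀ (g : G) (u : X), u ∈ Xpᗮ → T g u ∈ Xpᗮ)
    (g : G) (x : X) :
    (Submodule.orthogonalProjectionOnto Xpᗮ (T g x) : X) = T g (Submodule.orthogonalProjectionOnto Xpᗮ x : X) := by
  have hd1 : (Submodule.orthogonalProjectionOnto Xpᗮ (T g x) : X)
      = T g x - (Submodule.orthogonalProjectionOnto Xp (T g x) : X) := by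
    exact eq_sub_of_add_eq' (orthogonalProjection_add_orthogonalProjection_orthogonal Xp (T g x))
  have hd2 : (Submodule.orthogonalProjectionOnto Xpᗮ x : X) = x - (Submodule.orthogonalProjectionOnto Xp x : X) := by
    exact eq_sub_of_add_eq' (orthogonalProjection_add_orthogonalProjection_orthogonal Xp x)
  rw [hd1, projComm_aux T Xp hXpInv hXmInv g x, hd2, map_sub]

theorem stmt17 {X G : Type*} [NormedAddCommGroup X] [InnerProductSpace ℝ X] [CompleteSpace X]
    [Group G] (T : G →* (X ≃ₗᵢ[ℝ] X))
    (Xp : Submodule ℝ X) [Submodule.HasOrthogonalProjection Xp]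
    (hXpInv : ∀ (g : G) (u : X), u ∈ Xp → T g u ∈ Xp)
    (hXmInv : ∀ (g : G) (u : X), u ∈ Xpᗮ → T g u ∈ Xpᗮ)
    -- dislocation space property
    (hdisloc : ∀ (v : ℕ → X) (g : ℕ → G), ¬ OpWeakNull T g →
      (∀ φ : X, Tendsto (fun n => ⟪v n, φ⟫) atTop (nhds 0)) →
      ∃ ψ : ℕ → ℕ, StrictMono ψ ∧
        ∀ φ : X, Tendsto (fun n => ⟪T (g (ψ n)) (v (ψ n)), φ⟫) atTop (nhds 0))
    (I : X → ℝ) (hI : ContDiff ℝ 1 I) (hI0 : I 0 = 0)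
    (hIinv : ∀ (g : G) (u : X), I (T g u) = I u)
    -- sequential weak-to-weak* continuity of I'
    (hIww : ∀ (v : ℕ → X) (v₀ : X),
      (∀ φ : X, Tendsto (fun n => ⟪v n, φ⟫) atTop (nhds ⟪v₀, φ⟫)) →
      ∀ φ : X, Tendsto (fun n => fderiv ℝ I (v n) φ) atTop (nhds (fderiv ℝ I v₀ φ)))
    -- (GWC)
    (hGWC : ∀ (v φs : ℕ → X) (C : ℝ), (∀ n, ‖v n‖ ≤ C) → GWeakNull T φs →
      Tendsto (fun n => fderiv ℝ I (v n) (φs n)) atTop (nhds 0))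
    (J : X → ℝ)
    (hJ : ∀ u : X, J u = (1 / 2) * ‖(Submodule.orthogonalProjectionOnto Xp u : X)‖ ^ 2
      - (1 / 2) * ‖(Submodule.orthogonalProjectionOnto Xpᗮ u : X)‖ ^ 2 - I u)
    (u : ℕ → X) (C : ℝ) (hbdd : ∀ n, ‖u n‖ ≤ C)
    (hPS : Tendsto (fun n => ‖gradient J (u n)‖) atTop (nhds 0))
    (TN : X → ℝ) (hTN : ∀ v : X, TN v ≤ ‖v‖)
    (δ : ℝ) (hδ : 0 < δ) (hTNu : ∀ n, δ / 2 ≤ TN (u n)) :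
    ∃ ψ : ℕ → ℕ, StrictMono ψ ∧ ∃ g : ℕ → G, ∃ v : X, v ≠ 0 ∧
      (∀ φ : X, Tendsto (fun n => ⟪T (g n) (u (ψ n)), φ⟫) atTop (nhds ⟪v, φ⟫)) ∧
      fderiv ℝ J v = 0 := by
  classical
  -- basic facts
  have hC0 : (0 : ℝ) ≤ C := (norm_nonneg _).trans (hbdd 0)
  have hfd : ∀ w φ : X, fderiv ℝ J w φ = ⟪(Submodule.orthogonalProjectionOnto Xp w : X), φ⟫
      - ⟪(Submodule.orthogonalProjectionOnto Xpᗮ w : X), φ⟫ - fderiv ℝ I w φ :=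
    fun w φ => fderivJ_aux Xp I hI J hJ w φ
  have hgradfd : ∀ (w φ : X), ⟪gradient J w, φ⟫ = fderiv ℝ J w φ := by
    intro w φ
    simp only [gradient]
    exact InnerProductSpace.toDual_symm_apply
  have hTT : ∀ (g : G) (x : X), T g (T g⁻¹ x) = x := by
    intro g x
    have h : (T g) * (T g⁻¹) = 1 := by rw [← map_mul, mul_inv_cancel, map_one]
    calc T g (T g⁻¹ x) = ((T g) * (T g⁻¹)) x := by
          rw [LinearIsometryEquiv.coe_mul]; rfl
      _ = x := by rw [h]; rfl
  have hinv_inner : ∀ (g : G) (a b : X), (⟪T g a, b⟫ : ℝ) = ⟪a, T g⁻¹ b⟫ := by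
    intro g a b
    conv_lhs => rw [← hTT g b]
    exact LinearIsometryEquiv.inner_map_map (T g) a (T g⁻¹ b)
  -- norm of projections
  have hPnorm : ∀ x : X, ‖(Submodule.orthogonalProjectionOnto Xp x : X)‖ ≤ ‖x‖ := by
    intro x
    have h1 := (Submodule.orthogonalProjectionOnto Xp).le_opNorm x
    have h2 := orthogonalProjection_norm_le Xp
    calc ‖(Submodule.orthogonalProjectionOnto Xp x : X)‖ = ‖Submodule.orthogonalProjectionOnto Xp x‖ := rfl
      _ ≤ ‖Submodule.orthogonalProjectionOnto Xp‖ * ‖x‖ := h1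
      _ ≤ 1 * ‖x‖ := by
          exact mul_le_mul_of_nonneg_right h2 (norm_nonneg _)
      _ = ‖x‖ := one_mul _
  have hMnorm : ∀ x : X, ‖(Submodule.orthogonalProjectionOnto Xpᗮ x : X)‖ ≤ ‖x‖ := by
    intro x
    have h1 := (Submodule.orthogonalProjectionOnto Xpᗮ).le_opNorm x
    have h2 := orthogonalProjection_norm_le Xpᗮ
    calc ‖(Submodule.orthogonalProjectionOnto Xpᗮ x : X)‖ = ‖Submodule.orthogonalProjectionOnto Xpᗮ x‖ := rfl
      _ ≤ ‖Submodule.orthogonalProjectionOnto Xpᗮ‖ * ‖x‖ := h1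
      _ ≤ 1 * ‖x‖ := mul_le_mul_of_nonneg_right h2 (norm_nonneg _)
      _ = ‖x‖ := one_mul _
  -- Step 1: u does not G-weakly converge to 0
  have h_notnull : ¬ GWeakNull T u := by
    intro hnull
    have hnullP : GWeakNull T (fun n => (Submodule.orthogonalProjectionOnto Xp (u n) : X)) := by
      intro φ ε hε
      obtain ⟨N, hN⟩ := hnull ((Submodule.orthogonalProjectionOnto Xp φ : X)) ε hε
      refine ⟨N, fun n hn g => ?_⟩
      rw [inner_orthogonalProjection_left_eq_right,
        projComm_aux T Xp hXpInv hXmInv g φ]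
      exact hN n hn g
    have hnullM : GWeakNull T (fun n => (Submodule.orthogonalProjectionOnto Xpᗮ (u n) : X)) := by
      intro φ ε hε
      obtain ⟨N, hN⟩ := hnull ((Submodule.orthogonalProjectionOnto Xpᗮ φ : X)) ε hε
      refine ⟨N, fun n hn g => ?_⟩
      rw [inner_orthogonalProjection_left_eq_right,
        projComm'_aux T Xp hXpInv hXmInv g φ]
      exact hN n hn g
    have h1 : Tendsto (fun n => fderiv ℝ I (u n) ((Submodule.orthogonalProjectionOnto Xp (u n) : X)))
        atTop (nhds 0) := hGWC u _ C hbdd hnullP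
    have h2 : Tendsto (fun n => fderiv ℝ I (u n) ((Submodule.orthogonalProjectionOnto Xpᗮ (u n) : X)))
        atTop (nhds 0) := hGWC u _ C hbdd hnullM
    have hgP : Tendsto (fun n => (⟪gradient J (u n), (Submodule.orthogonalProjectionOnto Xp (u n) : X)⟫ : ℝ))
        atTop (nhds 0) := by
      refine squeeze_zero_norm (a := fun n => ‖gradient J (u n)‖ * C) (fun n => ?_) ?_
      · calc ‖(⟪gradient J (u n), (Submodule.orthogonalProjectionOnto Xp (u n) : X)⟫ : ℝ)‖
            ≤ ‖gradient J (u n)‖ * ‖(Submodule.orthogonalProjectionOnto Xp (u n) : X)‖ :=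
              abs_real_inner_le_norm _ _
          _ ≤ ‖gradient J (u n)‖ * C :=
              mul_le_mul_of_nonneg_left ((hPnorm _).trans (hbdd n)) (norm_nonneg _)
      · simpa using hPS.mul_const C
    have hgM : Tendsto (fun n => (⟪gradient J (u n), (Submodule.orthogonalProjectionOnto Xpᗮ (u n) : X)⟫ : ℝ))
        atTop (nhds 0) := by
      refine squeeze_zero_norm (a := fun n => ‖gradient J (u n)‖ * C) (fun n => ?_) ?_
      · calc ‖(⟪gradient J (u n), (Submodule.orthogonalProjectionOnto Xpᗮ (u n) : X)⟫ : ℝ)‖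
            ≤ ‖gradient J (u n)‖ * ‖(Submodule.orthogonalProjectionOnto Xpᗮ (u n) : X)‖ :=
              abs_real_inner_le_norm _ _
          _ ≤ ‖gradient J (u n)‖ * C :=
              mul_le_mul_of_nonneg_left ((hMnorm _).trans (hbdd n)) (norm_nonneg _)
      · simpa using hPS.mul_const C
    have hsqP : ∀ n, ‖(Submodule.orthogonalProjectionOnto Xp (u n) : X)‖ ^ 2
        = ⟪gradient J (u n), (Submodule.orthogonalProjectionOnto Xp (u n) : X)⟫
          + fderiv ℝ I (u n) ((Submodule.orthogonalProjectionOnto Xp (u n) : X)) := by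
      intro n
      have := hgradfd (u n) ((Submodule.orthogonalProjectionOnto Xp (u n) : X))
      rw [hfd] at this
      have hz : (⟪(Submodule.orthogonalProjectionOnto Xpᗮ (u n) : X), (Submodule.orthogonalProjectionOnto Xp (u n) : X)⟫ : ℝ)
          = 0 := by
        rw [real_inner_comm]
        exact Submodule.inner_right_of_mem_orthogonal (SetLike.coe_mem _) (SetLike.coe_mem _)
      rw [hz, real_inner_self_eq_norm_sq] at this
      linarith
    have hsqM : ∀ n, ‖(Submodule.orthogonalProjectionOnto Xpᗮ (u n) : X)‖ ^ 2
        = - ⟪gradient J (u n), (Submodule.orthogonalProjectionOnto Xpᗮ (u n) : X)⟫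
          - fderiv ℝ I (u n) ((Submodule.orthogonalProjectionOnto Xpᗮ (u n) : X)) := by
      intro n
      have := hgradfd (u n) ((Submodule.orthogonalProjectionOnto Xpᗮ (u n) : X))
      rw [hfd] at this
      have hz : (⟪(Submodule.orthogonalProjectionOnto Xp (u n) : X), (Submodule.orthogonalProjectionOnto Xpᗮ (u n) : X)⟫ : ℝ)
          = 0 :=
        Submodule.inner_right_of_mem_orthogonal (SetLike.coe_mem _) (SetLike.coe_mem _)
      rw [hz, real_inner_self_eq_norm_sq] at this
      linarith
    have hP0 : Tendsto (fun n => ‖(Submodule.orthogonalProjectionOnto Xp (u n) : X)‖ ^ 2) atTop (nhds 0) := by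
      simp only [hsqP]
      simpa using hgP.add h1
    have hM0 : Tendsto (fun n => ‖(Submodule.orthogonalProjectionOnto Xpᗮ (u n) : X)‖ ^ 2) atTop (nhds 0) := by
      simp only [hsqM]
      simpa using (hgM.neg).sub h2
    have hu0 : Tendsto (fun n => ‖u n‖ ^ 2) atTop (nhds 0) := by
      have hdecomp : ∀ n, ‖u n‖ ^ 2 = ‖(Submodule.orthogonalProjectionOnto Xp (u n) : X)‖ ^ 2
          + ‖(Submodule.orthogonalProjectionOnto Xpᗮ (u n) : X)‖ ^ 2 := by
        intro n
        have hd : u n = (Submodule.orthogonalProjectionOnto Xp (u n) : X)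
            + (Submodule.orthogonalProjectionOnto Xpᗮ (u n) : X) :=
          (orthogonalProjection_add_orthogonalProjection_orthogonal Xp (u n)).symm
        have hz : (⟪(Submodule.orthogonalProjectionOnto Xp (u n) : X),
            (Submodule.orthogonalProjectionOnto Xpᗮ (u n) : X)⟫ : ℝ) = 0 :=
          Submodule.inner_right_of_mem_orthogonal (SetLike.coe_mem _) (SetLike.coe_mem _)
        nth_rewrite 1 [hd]
        rw [norm_add_sq_real, hz]
        ring
      simp only [hdecomp]
      simpa using hP0.add hM0
    have hlb : ∀ n, (δ / 2) ^ 2 ≤ ‖u n‖ ^ 2 := by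
      intro n
      have h1 : δ / 2 ≤ ‖u n‖ := (hTNu n).trans (hTN (u n))
      exact pow_le_pow_left₀ (by positivity) h1 2
    have hev : ∀ᶠ n in atTop, ‖u n‖ ^ 2 < (δ / 2) ^ 2 := by
      have := hu0.eventually (eventually_lt_nhds (show (0:ℝ) < (δ / 2) ^ 2 by positivity))
      simpa using this
    obtain ⟨n, hn⟩ := hev.exists
    exact absurd (hlb n) (not_le.mpr hn)
  -- Step 2: extract a sequence with inner products bounded below
  rw [GWeakNull] at h_notnull
  push_neg at h_notnull
  obtain ⟨φ₀, ε₀, hε₀, hfreq⟩ := h_notnull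
  have hfr : ∃ᶠ n in atTop, ∃ g : G, ε₀ ≤ |(⟪u n, T g φ₀⟫ : ℝ)| := by
    rw [frequently_atTop]
    intro N
    obtain ⟨n, hn, g, hg⟩ := hfreq N
    exact ⟨n, hn, g, hg⟩
  obtain ⟨m, hm, hmp⟩ := extraction_of_frequently_atTop hfr
  choose g₀ hg₀ using hmp
  set w : ℕ → X := fun k => T (g₀ k)⁻¹ (u (m k)) with hw
  have hinner0 : ∀ k, (⟪w k, φ₀⟫ : ℝ) = ⟪u (m k), T (g₀ k) φ₀⟫ := by
    intro k
    rw [hw]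
    simp only
    rw [hinv_inner (g₀ k)⁻¹ (u (m k)) φ₀, inv_inv]
  have hwbdd : ∀ k, ‖w k‖ ≤ C := by
    intro k
    rw [hw]
    simp only [LinearIsometryEquiv.norm_map]
    exact hbdd _
  obtain ⟨ψ, hψ, v, hv⟩ := weak_compactness_aux w C hwbdd
  -- the limit is nonzero
  have hvlb : ε₀ ≤ |(⟪v, φ₀⟫ : ℝ)| := by
    apply ge_of_tendsto (hv φ₀).abs
    filter_upwards with k
    rw [hinner0]
    exact hg₀ (ψ k)
  have hvne : v ≠ 0 := by
    intro h
    rw [h] at hvlb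
    simp only [inner_zero_left, abs_zero] at hvlb
    exact absurd hvlb (not_le.mpr hε₀)
  -- gradient norm is G-invariant
  have hIfd : ∀ (g : G) (x φ : X), fderiv ℝ I (T g x) φ = fderiv ℝ I x (T g⁻¹ φ) := by
    intro g x φ
    have hIc : I ∘ (T g).toContinuousLinearEquiv = I := funext fun y => hIinv g y
    have := ContinuousLinearEquiv.comp_right_fderiv (iso := (T g).toContinuousLinearEquiv)
      (f := I) (x := x)
    rw [hIc] at this
    have happ := congrFun (congrArg DFunLike.coe this) (T g⁻¹ φ)
    simp only [ContinuousLinearMap.coe_comp', Function.comp_apply] at happ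
    have hco : ((T g).toContinuousLinearEquiv : X →L[ℝ] X) (T g⁻¹ φ) = T g (T g⁻¹ φ) := rfl
    have hco2 : (T g).toContinuousLinearEquiv x = T g x := rfl
    rw [hco, hTT g φ, hco2] at happ
    exact happ.symm
  have hgradinv : ∀ (g : G) (x : X), gradient J (T g x) = T g (gradient J x) := by
    intro g x
    apply ext_inner_right ℝ
    intro φ
    rw [hgradfd, hfd, projComm_aux T Xp hXpInv hXmInv g x,
      projComm'_aux T Xp hXpInv hXmInv g x, hIfd g x φ,
      hinv_inner g (Submodule.orthogonalProjectionOnto Xp x : X) φ,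
      hinv_inner g (Submodule.orthogonalProjectionOnto Xpᗮ x : X) φ,
      hinv_inner g (gradient J x) φ, hgradfd, hfd]
  have hgrad0 : Tendsto (fun k => ‖gradient J (w (ψ k))‖) atTop (nhds 0) := by
    have heq : ∀ k, ‖gradient J (w (ψ k))‖ = ‖gradient J (u (m (ψ k)))‖ := by
      intro k
      rw [hw]
      simp only
      rw [hgradinv (g₀ (ψ k))⁻¹ (u (m (ψ k))), LinearIsometryEquiv.norm_map]
    simp only [heq]
    exact hPS.comp ((hm.comp hψ).tendsto_atTop)
  -- criticality of the limit
  have hcrit : fderiv ℝ J v = 0 := by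
    ext φ
    rw [ContinuousLinearMap.zero_apply]
    have h1 : Tendsto (fun k => (⟪gradient J (w (ψ k)), φ⟫ : ℝ)) atTop (nhds 0) := by
      refine squeeze_zero_norm (a := fun k => ‖gradient J (w (ψ k))‖ * ‖φ‖) (fun k => ?_) ?_
      · exact abs_real_inner_le_norm _ _
      · simpa using hgrad0.mul_const ‖φ‖
    have h2 : ∀ k, (⟪gradient J (w (ψ k)), φ⟫ : ℝ)
        = ⟪w (ψ k), (Submodule.orthogonalProjectionOnto Xp φ : X)⟫
          - ⟪w (ψ k), (Submodule.orthogonalProjectionOnto Xpᗮ φ : X)⟫ - fderiv ℝ I (w (ψ k)) φ := by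
      intro k
      rw [hgradfd, hfd, inner_orthogonalProjection_left_eq_right,
        inner_orthogonalProjection_left_eq_right]
    have h3 : Tendsto (fun k => (⟪w (ψ k), (Submodule.orthogonalProjectionOnto Xp φ : X)⟫ : ℝ)
        - ⟪w (ψ k), (Submodule.orthogonalProjectionOnto Xpᗮ φ : X)⟫ - fderiv ℝ I (w (ψ k)) φ) atTop
        (nhds ((⟪v, (Submodule.orthogonalProjectionOnto Xp φ : X)⟫ : ℝ)
          - ⟪v, (Submodule.orthogonalProjectionOnto Xpᗮ φ : X)⟫ - fderiv ℝ I v φ)) :=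
      ((hv _).sub (hv _)).sub (hIww (fun k => w (ψ k)) v hv φ)
    have h4 : (⟪v, (Submodule.orthogonalProjectionOnto Xp φ : X)⟫ : ℝ)
        - ⟪v, (Submodule.orthogonalProjectionOnto Xpᗮ φ : X)⟫ - fderiv ℝ I v φ = 0 := by
      apply tendsto_nhds_unique h3
      have := h1
      simp only [h2] at this
      exact this
    rw [hfd, inner_orthogonalProjection_left_eq_right,
      inner_orthogonalProjection_left_eq_right]
    exact h4
  exact ⟨fun k => m (ψ k), hm.comp hψ, fun k => (g₀ (ψ k))⁻¹, v, hvne, hv, hcrit⟩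
end
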